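/- Let G be a totally bounded topological group, i.e., a topological group such that for every neighbourhood U of the identity there is a finite subset F of G with G = FU. Then every neighbourhood U of the identity of G is a Ramsey m-product subset for every integer vector m = (m_1, ..., m_k) with m_1 + ... + m_k = 0. -/

import Mathlib

open Pointwise

/-- `A` is a Ramsey `m`-product subset of `G` (for `m = (m 0, …, m (k-1)) ∈ ℤ^k`)
if every infinite `X ⊆ G` contains pairwise distinct elements `x 0, …, x (k-1)`
such that `x (σ 0) ^ m 0 * x (σ 1) ^ m 1 * ⋯ * x (σ (k-1)) ^ m (k-1) ∈ A` for
every permutation `σ` of `Fin k`. -/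
def IsRamseyProdSub {G : Type*} [Group G] {k : ℕ} (m : Fin k → ℤ) (A : Set G) : Prop :=
  ∀ X : Set G, X.Infinite →
    ∃ x : Fin k → G, (∀ i, x i ∈ X) ∧ Function.Injective x ∧
      ∀ σ : Equiv.Perm (Fin k), (List.ofFn fun i => x (σ i) ^ m i).prod ∈ A


open Pointwise

/-- Set of all conjugates of elements of `V`. -/
private def RamseyAux.conjSet {G : Type*} [Group G] (V : Set G) : Set G :=
  {x | ∃ g, ∃ v ∈ V, x = g * v * g⁻¹}

namespace RamseyAux

variable {G : Type*} [Group G] {V : Set G}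

private lemma mem_conjSet (g v : G) (hv : v ∈ V) : g * v * g⁻¹ ∈ conjSet V :=
  ⟨g, v, hv, rfl⟩

private lemma conj_mem_conjSet {s : G} (hs : s ∈ conjSet V) (d : G) :
    d * s * d⁻¹ ∈ conjSet V := by
  obtain ⟨g, v, hv, rfl⟩ := hs
  exact ⟨d * g, v, hv, by group⟩

private lemma inv_mem_conjSet (hVs : V⁻¹ = V) {s : G} (hs : s ∈ conjSet V) :
    s⁻¹ ∈ conjSet V := by
  obtain ⟨g, v, hv, rfl⟩ := hs
  refine ⟨g, v⁻¹, ?_, by group⟩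
  rw [← hVs]; simpa using hv

private lemma conj_mem_pow :
    ∀ n : ℕ, ∀ t ∈ conjSet V ^ n, ∀ d : G, d * t * d⁻¹ ∈ conjSet V ^ n := by
  intro n
  induction n with
  | zero => intro t ht d; simp only [pow_zero, Set.mem_one] at ht ⊢; simp [ht]
  | succ n ih =>
    intro t ht d
    rw [pow_succ] at ht ⊢
    obtain ⟨a, ha, s, hs, rfl⟩ := ht
    have : d * (a * s) * d⁻¹ = (d * a * d⁻¹) * (d * s * d⁻¹) := by group
    rw [this]
    exact Set.mul_mem_mul (ih a ha d) (conj_mem_conjSet hs d)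

private lemma inv_mem_pow (hVs : V⁻¹ = V) :
    ∀ n : ℕ, ∀ t ∈ conjSet V ^ n, t⁻¹ ∈ conjSet V ^ n := by
  intro n
  induction n with
  | zero => intro t ht; simp only [pow_zero, Set.mem_one] at ht ⊢; simp [ht]
  | succ n ih =>
    intro t ht
    rw [pow_succ] at ht
    obtain ⟨a, ha, s, hs, rfl⟩ := ht
    rw [pow_succ', mul_inv_rev]
    exact Set.mul_mem_mul (inv_mem_conjSet hVs hs) (ih a ha)

private lemma pow_eq (c v : G) (hv : v ∈ V) :
    ∀ n : ℕ, ∃ t ∈ conjSet V ^ n, (c * v) ^ n = t * c ^ n := by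
  intro n
  induction n with
  | zero => exact ⟨1, by simp, by simp⟩
  | succ n ih =>
    obtain ⟨t, ht, heq⟩ := ih
    refine ⟨t * (c ^ (n + 1) * v * (c ^ (n + 1))⁻¹), ?_, ?_⟩
    · rw [pow_succ]
      exact Set.mul_mem_mul ht (mem_conjSet _ _ hv)
    · rw [pow_succ (c * v), heq, pow_succ c]
      group

private lemma zpow_eq (hVs : V⁻¹ = V) (c v : G) (hv : v ∈ V) (m : ℤ) :
    ∃ t ∈ conjSet V ^ m.natAbs, (c * v) ^ m = t * c ^ m := by
  rcases Int.natAbs_eq m with h | h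
  · obtain ⟨t, ht, heq⟩ := pow_eq c v hv m.natAbs
    exact ⟨t, ht, by rw [h, zpow_natCast, zpow_natCast, heq]⟩
  · obtain ⟨t, ht, heq⟩ := pow_eq c v hv m.natAbs
    refine ⟨(c ^ m.natAbs)⁻¹ * t⁻¹ * ((c ^ m.natAbs)⁻¹)⁻¹, ?_, ?_⟩
    · exact conj_mem_pow _ _ (inv_mem_pow hVs _ _ ht) _
    · rw [h, zpow_neg, zpow_natCast, zpow_neg, zpow_natCast, heq]
      simp only [Int.natAbs_neg, Int.natAbs_natCast]
      group

private lemma list_prod_eq (hVs : V⁻¹ = V) (c : G) :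
    ∀ L : List (G × ℤ), (∀ p ∈ L, ∃ v ∈ V, p.1 = c * v) →
      ∃ t ∈ conjSet V ^ (L.map fun p => p.2.natAbs).sum,
        (L.map fun p => p.1 ^ p.2).prod = t * c ^ (L.map Prod.snd).sum := by
  intro L
  induction L with
  | nil => intro _; exact ⟨1, by simp, by simp⟩
  | cons p L ih =>
    intro hmem
    obtain ⟨t₂, ht₂, heq₂⟩ := ih fun q hq => hmem q (List.mem_cons_of_mem _ hq)
    obtain ⟨v, hv, hp⟩ := hmem p List.mem_cons_self
    obtain ⟨t₁, ht₁, heq₁⟩ := zpow_eq hVs c v hv p.2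
    refine ⟨t₁ * (c ^ p.2 * t₂ * (c ^ p.2)⁻¹), ?_, ?_⟩
    · simp only [List.map_cons, List.sum_cons, pow_add]
      exact Set.mul_mem_mul ht₁ (conj_mem_pow _ _ ht₂ _)
    · simp only [List.map_cons, List.prod_cons, List.sum_cons]
      rw [hp, heq₁, heq₂, zpow_add]
      group

end RamseyAux

open Pointwise

namespace RamseyAux

variable {G : Type*} [Group G] [TopologicalSpace G] [IsTopologicalGroup G]

private lemma exists_pow_subset :
    ∀ (n : ℕ) (U : Set G), U ∈ nhds 1 → ∃ W ∈ nhds (1 : G), W ^ n ⊆ U := by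
  intro n
  induction n with
  | zero =>
    intro U hU
    exact ⟨U, hU, by simpa using mem_of_mem_nhds hU⟩
  | succ n ih =>
    intro U hU
    obtain ⟨A, Aopen, hA1, hAA⟩ := exists_open_nhds_one_mul_subset hU
    obtain ⟨W₁, hW₁, hW₁n⟩ := ih A (Aopen.mem_nhds hA1)
    refine ⟨W₁ ∩ A, Filter.inter_mem hW₁ (Aopen.mem_nhds hA1), ?_⟩
    rw [pow_succ]
    calc (W₁ ∩ A) ^ n * (W₁ ∩ A) ⊆ A * A :=
          Set.mul_subset_mul ((Set.pow_subset_pow_left Set.inter_subset_left).trans hW₁n)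
            Set.inter_subset_right
      _ ⊆ U := hAA

private lemma exists_sin
    (htb : ∀ U ∈ nhds (1 : G), ∃ F : Finset G, (F : Set G) * U = Set.univ)
    {W : Set G} (hW : W ∈ nhds 1) :
    ∃ V ∈ nhds (1 : G), V⁻¹ = V ∧ ∀ g : G, ∀ v ∈ V, g * v * g⁻¹ ∈ W := by
  obtain ⟨A, Aopen, hA1, hAA⟩ := exists_open_nhds_one_mul_subset hW
  obtain ⟨B', B'open, hB'1, hBB'⟩ := exists_open_nhds_one_mul_subset (Aopen.mem_nhds hA1)
  set B : Set G := B' ∩ A with hBdef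
  have hBnhds : B ∈ nhds (1 : G) := Filter.inter_mem (B'open.mem_nhds hB'1) (Aopen.mem_nhds hA1)
  have hB3 : ∀ a ∈ B, ∀ b ∈ B, ∀ c ∈ B, a * b * c ∈ W := by
    intro a ha b hb c hc
    have hab : a * b ∈ A := hBB' (Set.mul_mem_mul ha.1 hb.1)
    exact hAA (Set.mul_mem_mul hab hc.2)
  set W₀ : Set G := B ∩ B⁻¹ with hW₀def
  have hW₀nhds : W₀ ∈ nhds (1 : G) := Filter.inter_mem hBnhds (inv_mem_nhds_one G hBnhds)
  have hW₀sym : ∀ w ∈ W₀, w⁻¹ ∈ W₀ := fun w hw => ⟨hw.2, by simpa using hw.1⟩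
  have hW₀B : W₀ ⊆ B := Set.inter_subset_left
  obtain ⟨F, hF⟩ := htb W₀ hW₀nhds
  refine ⟨W₀ ∩ ⋂ c ∈ (F : Set G), {y | c⁻¹ * y * c ∈ W₀}, ?_, ?_, ?_⟩
  · refine Filter.inter_mem hW₀nhds ?_
    rw [Filter.biInter_mem F.finite_toSet]
    intro c _
    have hcont : Continuous fun y : G => c⁻¹ * y * c := by continuity
    have h1 : (fun y : G => c⁻¹ * y * c) 1 = 1 := by group
    have : c⁻¹ * 1 * c = 1 := by group
    exact hcont.continuousAt.preimage_mem_nhds (by rw [this]; exact hW₀nhds)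
  · have key : ∀ y ∈ W₀ ∩ ⋂ c ∈ (F : Set G), {y | c⁻¹ * y * c ∈ W₀},
        y⁻¹ ∈ W₀ ∩ ⋂ c ∈ (F : Set G), {y | c⁻¹ * y * c ∈ W₀} := by
      intro y hy
      refine ⟨hW₀sym _ hy.1, Set.mem_iInter₂.2 fun c hc => ?_⟩
      have h := Set.mem_iInter₂.1 hy.2 c hc
      have h2 : c⁻¹ * y⁻¹ * c = (c⁻¹ * y * c)⁻¹ := by group
      rw [Set.mem_setOf_eq, h2]
      exact hW₀sym _ h
    refine Set.ext fun y => ⟨fun h => ?_, fun h => key y h⟩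
    simpa using key _ h
  · intro g v hv
    have hginv : g⁻¹ ∈ (F : Set G) * W₀ := hF ▸ Set.mem_univ _
    obtain ⟨c, hc, w, hw, hcw⟩ := hginv
    have hg : g = w⁻¹ * c⁻¹ := by
      have h := congrArg Inv.inv hcw
      rw [mul_inv_rev, inv_inv] at h
      exact h.symm
    have h1 : c⁻¹ * v * c ∈ W₀ := Set.mem_iInter₂.1 hv.2 c hc
    have heq : g * v * g⁻¹ = w⁻¹ * (c⁻¹ * v * c) * w := by rw [hg]; group
    rw [heq]
    exact hB3 _ (hW₀B (hW₀sym _ hw)) _ (hW₀B h1) _ (hW₀B hw)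

end RamseyAux
/-- If `G` is a totally bounded topological group (for every neighbourhood `U` of
the identity there is a finite `F` with `G = F * U`), then every neighbourhood of
the identity is a Ramsey `m`-product subset for every integer vector `m` with
`m 0 + ⋯ + m (k-1) = 0`. -/
theorem nhds_one_ramseyProd_of_totallyBounded
    {G : Type*} [Group G] [TopologicalSpace G] [IsTopologicalGroup G]
    (htb : ∀ U ∈ nhds (1 : G), ∃ F : Finset G, (F : Set G) * U = Set.univ) :
    ∀ U ∈ nhds (1 : G), ∀ (k : ℕ), 0 < k → ∀ m : Fin k → ℤ,
      (∑ i, m i) = 0 → IsRamseyProdSub m U := by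
  intro U hU k _hk m hm0
  set N : ℕ := ∑ i, (m i).natAbs with hNdef
  obtain ⟨W, hW, hWN⟩ := RamseyAux.exists_pow_subset N U hU
  obtain ⟨V, hV, hVsym, hsin⟩ := RamseyAux.exists_sin htb hW
  have hSW : RamseyAux.conjSet V ⊆ W := by
    rintro s ⟨g, v, hv, rfl⟩
    exact hsin g v hv
  have hSN : RamseyAux.conjSet V ^ N ⊆ U :=
    (Set.pow_subset_pow_left hSW).trans hWN
  obtain ⟨F, hF⟩ := htb V hV
  intro X hX
  -- pigeonhole: some translate c • V contains infinitely many elements of X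
  have hcov : X ⊆ ⋃ c ∈ (F : Set G), X ∩ c • V := by
    intro y hy
    have : y ∈ (F : Set G) * V := hF ▸ Set.mem_univ y
    obtain ⟨c, hc, v, hv, hcv⟩ := this
    exact Set.mem_biUnion hc ⟨hy, ⟨v, hv, hcv⟩⟩
  have hpig : ∃ c ∈ (F : Set G), (X ∩ c • V).Infinite := by
    by_contra hcon
    push_neg at hcon
    exact hX ((Set.Finite.biUnion F.finite_toSet hcon).subset hcov)
  obtain ⟨c, _hc, hYinf⟩ := hpig
  set Y := X ∩ c • V with hYdef
  set e : ℕ ↪ Y := Set.Infinite.natEmbedding Y hYinf with hedef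
  refine ⟨fun i => (e i.1 : G), fun i => (e i.1).2.1, ?_, ?_⟩
  · intro i j hij
    have h1 : e i.1 = e j.1 := Subtype.coe_injective hij
    exact Fin.val_injective (e.injective h1)
  · intro σ
    set x : Fin k → G := fun i => (e i.1 : G) with hxdef
    have hxV : ∀ i, ∃ v ∈ V, x i = c * v := by
      intro i
      obtain ⟨v, hv, hcv⟩ := (e i.1).2.2
      exact ⟨v, hv, by simpa [hxdef, smul_eq_mul] using hcv.symm⟩
    obtain ⟨t, ht, heq⟩ := RamseyAux.list_prod_eq hVsym c
      (List.ofFn fun i => (x (σ i), m i)) (by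
        intro p hp
        rw [List.mem_ofFn] at hp
        obtain ⟨i, hi⟩ := hp
        obtain ⟨v, hv, hxv⟩ := hxV (σ i)
        exact ⟨v, hv, by rw [← hi]; exact hxv⟩)
    rw [List.map_ofFn, List.map_ofFn] at heq
    rw [List.map_ofFn] at ht
    have hsum : (List.ofFn ((Prod.snd : G × ℤ → ℤ) ∘ fun i => (x (σ i), m i))).sum = 0 := by
      simpa [List.sum_ofFn] using hm0
    have hNsum : (List.ofFn ((fun p : G × ℤ => p.2.natAbs) ∘ fun i => (x (σ i), m i))).sum
        = N := by
      simp [List.sum_ofFn, hNdef]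
    rw [hNsum] at ht
    rw [hsum] at heq
    have heq2 : (List.ofFn fun i => x (σ i) ^ m i).prod = t := by
      simpa [Function.comp_def] using heq
    rw [heq2]
    exact hSN ht
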